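/- Let X be a random variable with mean 0 and variance 1, and let c > 0. Then P(|X| > c) ≤ 2/(1 + c²). -/

import Mathlib

open MeasureTheory

theorem prob_abs_gt_le
    {Ω : Type*} [MeasurableSpace Ω] (μ : Measure Ω) [IsProbabilityMeasure μ]
    (X : Ω → ℝ) (c : ℝ) (hc : 0 < c)
    (hX2 : MemLp X 2 μ)
    (hmean : ∫ ω, X ω ∂μ = 0)
    (hvar : ∫ ω, (X ω) ^ 2 ∂μ = 1) :
    (μ {ω | c < |X ω|}).toReal ≤ 2 / (1 + c ^ 2) := by
  have hpos : (0:ℝ) < 1 + c ^ 2 := by positivity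
  by_cases hc1 : 1 ≤ c
  · -- Chebyshev
    have hvarX : ProbabilityTheory.variance X μ = 1 := by
      rw [ProbabilityTheory.variance_eq_sub hX2]
      simp only [Pi.pow_apply] at *
      rw [hmean, hvar]; ring
    have hcheb := ProbabilityTheory.meas_ge_le_variance_div_sq hX2 hc
    rw [hvarX, hmean] at hcheb
    simp only [sub_zero] at hcheb
    have hsub : μ {ω | c < |X ω|} ≤ μ {ω | c ≤ |X ω|} :=
      measure_mono (fun ω hω => le_of_lt (Set.mem_setOf_eq ▸ hω))
    have h1 : (μ {ω | c < |X ω|}).toReal ≤ 1 / c ^ 2 := by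
      have := hsub.trans hcheb
      have h2 := ENNReal.toReal_mono (by simp) this
      rwa [ENNReal.toReal_ofReal (by positivity)] at h2
    refine h1.trans ?_
    rw [div_le_div_iff₀ (by positivity) hpos]
    nlinarith [sq_nonneg c, sq_nonneg (c-1)]
  · have h1 : (μ {ω | c < |X ω|}).toReal ≤ 1 := by
      have := prob_le_one (μ := μ) (s := {ω | c < |X ω|})
      have h2 := ENNReal.toReal_mono (by simp) this
      simpa using h2
    refine h1.trans ?_
    rw [le_div_iff₀ hpos]
    nlinarith [hc.le, not_le.mp hc1]
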